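/- arXiv:2001.11213 — 2 statements merged into one kernel-verified Lean document; each statement's English description precedes it below -/
import Mathlib

section
/- For every real number c ≥ 6 and every positive integer N such that N + 1 ≤ c/3, one has (e^{−c}/√c) · Σ_{k=0}^N (2c)^k / k! ≤ (1/√6) · (6/e²)^{c/3}. -/
open Finset

/-- For every real `c ≥ 6` and every positive integer `N` with
`N + 1 ≤ c/3`, one has `(e^{-c}/√c) · ∑_{k=0}^N (2c)^k/k! ≤ (1/√6) · (6/e²)^{c/3}`. -/
theorem sum_exp_bound (c : ℝ) (hc : 6 ≤ c) (N : ℕ) (hN : 0 < N)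
    (hNc : (N : ℝ) + 1 ≤ c / 3) :
    (Real.exp (-c) / Real.sqrt c) *
        ∑ k ∈ Finset.range (N + 1), (2 * c) ^ k / (Nat.factorial k : ℝ) ≤
      (1 / Real.sqrt 6) * (6 / Real.exp 1 ^ 2) ^ (c / 3) := by
  have hc0 : (0:ℝ) < c := lt_of_lt_of_le (by norm_num) hc
  have hc3 : (0:ℝ) ≤ c / 3 := by linarith
  -- Each term is at most `exp (c/3) * 6^k`
  have hterm : ∀ k, (2 * c) ^ k / (Nat.factorial k : ℝ) ≤ Real.exp (c/3) * 6 ^ k := by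
    intro k
    have h1 : (2 * c) ^ k / (Nat.factorial k : ℝ) = 6 ^ k * ((c/3) ^ k / (Nat.factorial k : ℝ)) := by
      rw [← mul_div_assoc, ← mul_pow]; ring_nf
    rw [h1, mul_comm]
    have h2 : (c/3) ^ k / (Nat.factorial k : ℝ) ≤ Real.exp (c/3) :=
      Real.pow_div_factorial_le_exp (x := c/3) hc3 k
    exact mul_le_mul_of_nonneg_right h2 (by positivity)
  -- Bound the sum
  have hsum : ∑ k ∈ Finset.range (N + 1), (2 * c) ^ k / (Nat.factorial k : ℝ)
      ≤ Real.exp (c/3) * (6:ℝ) ^ (c/3) := by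
    calc ∑ k ∈ Finset.range (N + 1), (2 * c) ^ k / (Nat.factorial k : ℝ)
        ≤ ∑ k ∈ Finset.range (N + 1), Real.exp (c/3) * 6 ^ k :=
          Finset.sum_le_sum fun k _ => hterm k
      _ = Real.exp (c/3) * ∑ k ∈ Finset.range (N + 1), (6:ℝ) ^ k := by
          rw [Finset.mul_sum]
      _ ≤ Real.exp (c/3) * (6:ℝ) ^ (c/3) := by
          refine mul_le_mul_of_nonneg_left ?_ (Real.exp_pos _).le
          have hg : ∑ k ∈ Finset.range (N + 1), (6:ℝ) ^ k ≤ (6:ℝ) ^ (N+1) := by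
            have := geom_sum_eq (by norm_num : (6:ℝ) ≠ 1) (N+1)
            rw [this]
            rw [div_le_iff₀ (by norm_num : (0:ℝ) < 6 - 1)]
            have : (0:ℝ) ≤ (6:ℝ) ^ (N+1) := by positivity
            nlinarith
          refine hg.trans ?_
          have : ((6:ℝ) ^ (N+1) : ℝ) = (6:ℝ) ^ ((N:ℝ) + 1) := by
            rw [← Real.rpow_natCast (6:ℝ) (N+1)]; push_cast; ring_nf
          rw [this]
          exact Real.rpow_le_rpow_of_exponent_le (by norm_num) hNc
  -- Rewrite the RHS
  have hrhs : (6 / Real.exp 1 ^ 2) ^ (c / 3)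
      = (6:ℝ) ^ (c/3) / Real.exp (2 * (c/3)) := by
    rw [Real.div_rpow (by norm_num) (by positivity)]
    congr 1
    rw [show Real.exp 1 ^ 2 = Real.exp 1 ^ (2:ℕ) from rfl, Real.exp_one_pow,
      ← Real.exp_mul]
    norm_num
  rw [hrhs]
  have hsc : Real.sqrt 6 ≤ Real.sqrt c := Real.sqrt_le_sqrt hc
  have hs6 : (0:ℝ) < Real.sqrt 6 := Real.sqrt_pos.mpr (by norm_num)
  have hsc0 : (0:ℝ) < Real.sqrt c := Real.sqrt_pos.mpr hc0
  calc (Real.exp (-c) / Real.sqrt c) *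
        ∑ k ∈ Finset.range (N + 1), (2 * c) ^ k / (Nat.factorial k : ℝ)
      ≤ (Real.exp (-c) / Real.sqrt 6) * (Real.exp (c/3) * (6:ℝ) ^ (c/3)) := by
        refine mul_le_mul ?_ hsum ?_ (by positivity)
        · exact div_le_div_of_nonneg_left (Real.exp_pos _).le hs6 hsc
        · refine Finset.sum_nonneg fun k _ => by positivity
    _ = (1 / Real.sqrt 6) * ((6:ℝ) ^ (c/3) / Real.exp (2 * (c/3))) := by
        have he : Real.exp (-c) * Real.exp (c/3) * Real.exp (2*c/3) = 1 := by
          rw [← Real.exp_add, ← Real.exp_add, show -c + c/3 + 2*c/3 = 0 by ring,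
            Real.exp_zero]
        field_simp
        linear_combination (norm := ring_nf) he
end

section
/- Let c ≥ 6 and s > 0, and assume the eigen-decomposition hypotheses on the Sinc kernel operator Q_c hold. Then every f ∈ L²(I) with ‖f‖_{H̃^s} < ∞ satisfies ‖f − Q_c f‖_{L²(I)} ≤ (7/√6) (6/e²)^{⌊c/3⌋} ‖f‖ + ⌊c/3⌋^{−s} ‖f‖_{H̃^s}. -/
open MeasureTheory

noncomputable section

/-- The `L²([-1,1])` inner product. -/
def ipI (f g : ℝ → ℝ) : ℝ := ∫ x in Set.Icc (-1 : ℝ) 1, f x * g x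

/-- The `L²([-1,1])` norm. -/
def normI (f : ℝ → ℝ) : ℝ := Real.sqrt (ipI f f)

/-- The Sinc kernel on `I = [-1,1]`, with value `c/π` on the diagonal. -/
def sincK (c x y : ℝ) : ℝ :=
  if x = y then c / Real.pi else Real.sin (c * (x - y)) / (Real.pi * (x - y))

/-- The Sinc kernel integral operator `Q_c` on `L²(I)`. -/
def Qc (c : ℝ) (g : ℝ → ℝ) (x : ℝ) : ℝ := ∫ y in Set.Icc (-1 : ℝ) 1, sincK c x y * g y

/-- The weighted Sobolev norm `‖g‖_{H̃^s}` associated with the eigenfunctions `ψ`. -/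
def tildeNorm (ψ : ℕ → ℝ → ℝ) (s : ℝ) (g : ℝ → ℝ) : ℝ :=
  Real.sqrt (∑' k : ℕ, (1 + (k : ℝ) ^ 2) ^ s * (ipI g (ψ k)) ^ 2)

abbrev Iset : Set ℝ := Set.Icc (-1 : ℝ) 1
abbrev muI : Measure ℝ := volume.restrict Iset

instance : IsFiniteMeasure muI := by
  constructor
  rw [Measure.restrict_apply_univ, Real.volume_Icc]
  exact ENNReal.ofReal_lt_top

lemma sincK_symm (c x y : ℝ) : sincK c x y = sincK c y x := by
  unfold sincK
  rcases eq_or_ne x y with h | h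
  · simp [h]
  · rw [if_neg h, if_neg (Ne.symm h)]
    rw [show c * (x - y) = -(c * (y - x)) by ring, Real.sin_neg,
      show Real.pi * (x - y) = -(Real.pi * (y - x)) by ring, neg_div_neg_eq]

lemma sincK_abs_le {c : ℝ} (hc : 0 ≤ c) (x y : ℝ) : |sincK c x y| ≤ c / Real.pi := by
  unfold sincK
  rcases eq_or_ne x y with h | h
  · rw [if_pos h, abs_of_nonneg (div_nonneg hc Real.pi_pos.le)]
  · rw [if_neg h, abs_div, abs_mul, abs_of_nonneg Real.pi_pos.le]
    have hxy : 0 < |x - y| := abs_pos.mpr (sub_ne_zero.mpr h)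
    rw [div_le_div_iff₀ (by positivity) Real.pi_pos]
    have h1 : |Real.sin (c * (x - y))| ≤ c * |x - y| := by
      calc |Real.sin (c * (x - y))| ≤ |c * (x - y)| := Real.abs_sin_le_abs
        _ = c * |x - y| := by rw [abs_mul, abs_of_nonneg hc]
    calc |Real.sin (c * (x - y))| * Real.pi ≤ (c * |x - y|) * Real.pi :=
          mul_le_mul_of_nonneg_right h1 Real.pi_pos.le
      _ = c * (Real.pi * |x - y|) := by ring

lemma sincK_measurable (c : ℝ) : Measurable (fun p : ℝ × ℝ => sincK c p.1 p.2) := by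
  unfold sincK
  apply Measurable.ite
  · exact measurableSet_eq_fun measurable_fst measurable_snd
  · exact measurable_const
  · exact ((measurable_fst.sub measurable_snd).const_mul c).sin.div
      ((measurable_fst.sub measurable_snd).const_mul Real.pi)

lemma sqrt_add_le {a b : ℝ} (ha : 0 ≤ a) (hb : 0 ≤ b) :
    Real.sqrt (a + b) ≤ Real.sqrt a + Real.sqrt b := by
  rw [show a + b = a + b by rfl]
  have h1 := Real.sq_sqrt ha
  have h2 := Real.sq_sqrt hb
  have h3 := Real.sqrt_nonneg a
  have h4 := Real.sqrt_nonneg b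
  rw [← Real.sqrt_sq (by positivity : (0:ℝ) ≤ Real.sqrt a + Real.sqrt b)]
  apply Real.sqrt_le_sqrt
  nlinarith


lemma integrable_mul_L2 {f g : ℝ → ℝ} (hf : MemLp f 2 muI) (hg : MemLp g 2 muI) :
    Integrable (fun x => f x * g x) muI := by
  have h1 : Integrable (fun x => (f x + g x) ^ 2) muI := (hf.add hg).integrable_sq
  have h2 : Integrable (fun x => f x ^ 2) muI := hf.integrable_sq
  have h3 : Integrable (fun x => g x ^ 2) muI := hg.integrable_sq
  have : (fun x => f x * g x) = fun x => ((f x + g x) ^ 2 - f x ^ 2 - g x ^ 2) / 2 := by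
    funext x; ring
  rw [this]
  exact ((h1.sub h2).sub h3).div_const 2

lemma Qc_stronglyMeasurable {c : ℝ} {f : ℝ → ℝ} (hf : Measurable f) :
    StronglyMeasurable (Qc c f) := by
  have h : StronglyMeasurable (fun p : ℝ × ℝ => sincK c p.1 p.2 * f p.2) :=
    ((sincK_measurable c).mul (hf.comp measurable_snd)).stronglyMeasurable
  exact h.integral_prod_right'

lemma Qc_memL2 {c : ℝ} (hc : 0 ≤ c) {f : ℝ → ℝ} (hf : Measurable f)
    (hfi : Integrable f muI) : MemLp (Qc c f) 2 muI := by
  apply MemLp.of_bound (Qc_stronglyMeasurable hf).aestronglyMeasurable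
    (c / Real.pi * ∫ y in Iset, |f y|)
  apply Filter.Eventually.of_forall
  intro x
  rw [Real.norm_eq_abs]
  have h1 : |Qc c f x| ≤ ∫ y in Iset, |sincK c x y| * |f y| := by
    simpa [Qc, Real.norm_eq_abs, abs_mul] using
      norm_integral_le_integral_norm (μ := muI) (f := fun y => sincK c x y * f y)
  refine h1.trans ?_
  rw [← integral_const_mul]
  apply integral_mono_of_nonneg
    (Filter.Eventually.of_forall fun y => mul_nonneg (abs_nonneg _) (abs_nonneg _))
    (hfi.abs.const_mul _)
  apply Filter.Eventually.of_forall
  intro y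
  exact mul_le_mul_of_nonneg_right (sincK_abs_le hc x y) (abs_nonneg _)

lemma Qc_selfadj {c l : ℝ} (hc : 0 ≤ c) {f p : ℝ → ℝ} (hf : Measurable f)
    (hf2 : MemLp f 2 muI) (hp : Measurable p) (hp2 : MemLp p 2 muI)
    (heig : ∀ x ∈ Iset, Qc c p x = l * p x) :
    ipI (Qc c f) p = l * ipI f p := by
  have hfi : Integrable f muI := hf2.integrable one_le_two
  have hpi : Integrable p muI := hp2.integrable one_le_two
  have hint : Integrable (Function.uncurry fun x y => sincK c x y * f y * p x)
      (muI.prod muI) := by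
    refine Integrable.mono' ((hpi.abs.const_mul (c / Real.pi)).mul_prod hfi.abs) ?_ ?_
    · exact (((sincK_measurable c).mul (hf.comp measurable_snd)).mul
        (hp.comp measurable_fst)).aestronglyMeasurable
    · apply Filter.Eventually.of_forall
      rintro ⟨x, y⟩
      simp only [Function.uncurry, Real.norm_eq_abs]
      calc |sincK c x y * f y * p x| = |sincK c x y| * |f y| * |p x| := by
            rw [abs_mul, abs_mul]
        _ ≤ c / Real.pi * |f y| * |p x| :=
            mul_le_mul_of_nonneg_right
              (mul_le_mul_of_nonneg_right (sincK_abs_le hc x y) (abs_nonneg _)) (abs_nonneg _)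
        _ = c / Real.pi * |p x| * |f y| := by ring
  have step1 : ipI (Qc c f) p = ∫ x in Iset, ∫ y in Iset, sincK c x y * f y * p x := by
    unfold ipI Qc
    congr 1
    funext x
    rw [← integral_mul_const]
  have step2 : (∫ x in Iset, ∫ y in Iset, sincK c x y * f y * p x)
      = ∫ y in Iset, ∫ x in Iset, sincK c x y * f y * p x :=
    integral_integral_swap hint
  have step3 : (∫ y in Iset, ∫ x in Iset, sincK c x y * f y * p x)
      = ∫ y in Iset, f y * Qc c p y := by
    congr 1
    funext y
    rw [show (fun x => sincK c x y * f y * p x) = fun x => f y * (sincK c y x * p x) by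
      funext x; rw [sincK_symm c x y]; ring]
    rw [integral_const_mul]
    rfl
  have step4 : (∫ y in Iset, f y * Qc c p y) = ∫ y in Iset, l * (f y * p y) := by
    apply setIntegral_congr_fun measurableSet_Icc
    intro y hy
    dsimp only
    rw [heig y hy]; ring
  rw [step1, step2, step3, step4, integral_const_mul]
  rfl

lemma pow_div_fact_mono {c : ℝ} : ∀ (N : ℕ), (N : ℝ) ≤ 2 * c →
    ∀ n : ℕ, n ≤ N → (2 * c) ^ n / (Nat.factorial n : ℝ) ≤ (2 * c) ^ N / (Nat.factorial N : ℝ)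
  | 0 => by intro _ n hn; interval_cases n; simp
  | (N + 1) => by
    intro hN n hn
    have hc0 : (0:ℝ) ≤ 2 * c := le_trans (Nat.cast_nonneg _) hN
    rcases hn.lt_or_eq with h | h
    · have hN' : (N : ℝ) ≤ 2 * c := le_trans (by exact_mod_cast Nat.le_succ N) hN
      refine (pow_div_fact_mono N hN' n (Nat.lt_succ_iff.mp h)).trans ?_
      rw [pow_succ, Nat.factorial_succ]
      rw [div_le_div_iff₀ (by positivity) (by positivity)]
      push_cast
      have h1 : (1:ℝ) ≤ Nat.factorial N := by
        exact_mod_cast Nat.one_le_iff_ne_zero.mpr (Nat.factorial_ne_zero N)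
      have h2 : ((N:ℝ) + 1) ≤ 2 * c := by push_cast at hN; linarith
      have h3 : (0:ℝ) ≤ (2*c)^N := by positivity
      have h4 : (0:ℝ) < Nat.factorial N := by positivity
      nlinarith [mul_le_mul_of_nonneg_left h2 h3]
    · rw [h]

lemma eps_bound {c : ℝ} (hc : 6 ≤ c) :
    (7 / Real.sqrt c) * Real.exp (-c) * (2 * c) ^ (Nat.floor (c / 3)) /
      (Nat.factorial (Nat.floor (c / 3)) : ℝ) ≤
    (7 / Real.sqrt 6) * (6 / Real.exp 1 ^ 2) ^ (Nat.floor (c / 3)) := by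
  have hc0 : (0:ℝ) < c := by linarith
  set N : ℕ := Nat.floor (c / 3) with hNdef
  have hN2 : 2 ≤ N := by
    apply Nat.le_floor; push_cast; linarith
  have hN0 : (0:ℝ) < N := by
    have : (0:ℕ) < N := lt_of_lt_of_le (by norm_num) hN2
    exact_mod_cast this
  have h3N : 3 * (N:ℝ) ≤ c := by
    have h := Nat.floor_le (by positivity : (0:ℝ) ≤ c / 3)
    rw [← hNdef] at h
    linarith
  have ha : 7 / Real.sqrt c ≤ 7 / Real.sqrt 6 := by
    apply div_le_div_of_nonneg_left (by norm_num) (Real.sqrt_pos.mpr (by norm_num))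
    exact Real.sqrt_le_sqrt hc
  -- abbreviate E := exp 1 AFTER establishing needed exp identities
  have hfact : (N:ℝ) ^ N / (Nat.factorial N : ℝ) ≤ Real.exp 1 ^ N := by
    rw [Real.exp_one_pow]
    exact Real.pow_div_factorial_le_exp _ (Nat.cast_nonneg N) N
  have hexp3 : (Real.exp 1 ^ 3) ^ N = Real.exp (3 * (N:ℝ)) := by
    rw [← pow_mul, Real.exp_one_pow]
    congr 1
    push_cast; ring
  set E : ℝ := Real.exp 1 with hEdef
  have hEpos : 0 < E := Real.exp_pos 1
  have hfp : (0:ℝ) < (Nat.factorial N : ℝ) := by exact_mod_cast Nat.factorial_pos N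
  have hinv : (1:ℝ) / (Nat.factorial N : ℝ) ≤ E ^ N / (N:ℝ) ^ N := by
    rw [div_le_div_iff₀ hfp (by positivity)]
    rw [div_le_iff₀ hfp] at hfact
    nlinarith
  have h1 : c / (3 * N) ≤ Real.exp ((c - 3 * N) / (3 * N)) := by
    have he := Real.add_one_le_exp ((c - 3 * N) / (3 * N))
    have heq : (c - 3 * (N:ℝ)) / (3 * N) + 1 = c / (3 * N) := by field_simp; ring
    linarith
  have h2 : (c / (3 * N)) ^ N ≤ Real.exp (c - 3 * N) := by
    calc (c / (3 * N)) ^ N ≤ Real.exp ((c - 3 * N) / (3 * N)) ^ N :=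
          pow_le_pow_left₀ (by positivity) h1 N
      _ = Real.exp ((N:ℝ) * ((c - 3 * N) / (3 * N))) := by
          rw [← Real.exp_nat_mul]
      _ = Real.exp ((c - 3 * N) / 3) := by
          congr 1; field_simp
      _ ≤ Real.exp (c - 3 * N) := by
          apply Real.exp_le_exp.mpr
          rw [div_le_iff₀ (by norm_num : (0:ℝ) < 3)]
          nlinarith
  have hexpand : (2 * c) ^ N * E ^ N * (E ^ 2) ^ N
      = (6 * (N:ℝ)) ^ N * ((c / (3 * N)) ^ N * (E ^ 3) ^ N) := by
    rw [← mul_pow, ← mul_pow, ← mul_pow, ← mul_pow]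
    congr 1
    field_simp
    ring
  have hkey : (2 * c) ^ N * E ^ N * (E ^ 2) ^ N ≤ (6 * (N:ℝ)) ^ N * Real.exp c := by
    rw [hexpand, hexp3]
    apply mul_le_mul_of_nonneg_left _ (by positivity)
    calc (c / (3 * N)) ^ N * Real.exp (3 * (N:ℝ))
        ≤ Real.exp (c - 3 * N) * Real.exp (3 * (N:ℝ)) :=
          mul_le_mul_of_nonneg_right h2 (Real.exp_pos _).le
      _ = Real.exp c := by rw [← Real.exp_add]; ring_nf
  have hmain : Real.exp (-c) * (2 * c) ^ N / (Nat.factorial N : ℝ) ≤ (6 / E ^ 2) ^ N := by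
    have step1 : Real.exp (-c) * (2 * c) ^ N / (Nat.factorial N : ℝ) ≤
        Real.exp (-c) * (2 * c) ^ N * (E ^ N / (N:ℝ) ^ N) := by
      rw [div_eq_mul_one_div]
      exact mul_le_mul_of_nonneg_left hinv (by positivity)
    refine step1.trans ?_
    rw [div_pow, mul_div_assoc' (Real.exp (-c) * (2 * c) ^ N) _ _,
      div_le_div_iff₀ (by positivity) (by positivity)]
    have e1 : Real.exp (-c) * Real.exp c = 1 := by rw [← Real.exp_add]; simp
    have e2 : (6 * (N:ℝ)) ^ N = 6 ^ N * (N:ℝ) ^ N := mul_pow _ _ _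
    calc Real.exp (-c) * (2 * c) ^ N * E ^ N * (E ^ 2) ^ N
        = Real.exp (-c) * ((2 * c) ^ N * E ^ N * (E ^ 2) ^ N) := by ring
      _ ≤ Real.exp (-c) * ((6 * (N:ℝ)) ^ N * Real.exp c) :=
          mul_le_mul_of_nonneg_left hkey (Real.exp_pos _).le
      _ = Real.exp (-c) * (6 ^ N * (N:ℝ) ^ N * Real.exp c) := by rw [e2]
      _ = 6 ^ N * (N:ℝ) ^ N * (Real.exp (-c) * Real.exp c) := by ring
      _ = 6 ^ N * (N:ℝ) ^ N := by rw [e1, mul_one]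
  calc (7 / Real.sqrt c) * Real.exp (-c) * (2 * c) ^ N / (Nat.factorial N : ℝ)
      = (7 / Real.sqrt c) * (Real.exp (-c) * (2 * c) ^ N / (Nat.factorial N : ℝ)) := by ring
    _ ≤ (7 / Real.sqrt 6) * ((6 / E ^ 2) ^ N) := by
        apply mul_le_mul ha hmain _ (by positivity)
        apply div_nonneg _ hfp.le
        positivity

/-- Let `c ≥ 6`, `s > 0`, and assume the eigen-decomposition hypotheses
on the Sinc kernel operator `Q_c`: `(ψ_n)` orthonormal basis of `L²(I)`,
`Q_c ψ_n = λ_n ψ_n` with `λ_n ∈ (0,1)` and `1 − λ_n ≤ (7/√c) e^{−c} (2c)^n/n!` for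
`0 ≤ n < c/2.7`. Then every `f ∈ L²(I)` with `‖f‖_{H̃^s} < ∞` satisfies
`‖f − Q_c f‖ ≤ (7/√6)(6/e²)^{⌊c/3⌋} ‖f‖ + ⌊c/3⌋^{−s} ‖f‖_{H̃^s}`. -/
theorem sinc_operator_bias_bound (c s : ℝ) (hc : 6 ≤ c) (hs : 0 < s)
    (ψ : ℕ → ℝ → ℝ) (lam : ℕ → ℝ)
    (hψ_meas : ∀ n, Measurable (ψ n))
    (hψ_orth : ∀ m n : ℕ, ipI (ψ m) (ψ n) = if m = n then 1 else 0)
    (hψ_complete : ∀ g : ℝ → ℝ, MemLp g 2 (volume.restrict (Set.Icc (-1 : ℝ) 1)) →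
      ipI g g = ∑' n : ℕ, (ipI g (ψ n)) ^ 2)
    (hlam : ∀ n, lam n ∈ Set.Ioo (0 : ℝ) 1)
    (heig : ∀ n : ℕ, ∀ x ∈ Set.Icc (-1 : ℝ) 1, Qc c (ψ n) x = lam n * ψ n x)
    (hlam_bound : ∀ n : ℕ, (n : ℝ) < c / 2.7 →
      1 - lam n ≤ (7 / Real.sqrt c) * Real.exp (-c) * (2 * c) ^ n / (Nat.factorial n : ℝ))
    (f : ℝ → ℝ) (hf_meas : Measurable f)
    (hfL2 : MemLp f 2 (volume.restrict (Set.Icc (-1 : ℝ) 1)))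
    (hf_tilde : Summable (fun k : ℕ => (1 + (k : ℝ) ^ 2) ^ s * (ipI f (ψ k)) ^ 2)) :
    normI (fun x => f x - Qc c f x) ≤
      (7 / Real.sqrt 6) * (6 / Real.exp 1 ^ 2) ^ (Nat.floor (c / 3)) * normI f +
        (Nat.floor (c / 3) : ℝ) ^ (-s) * tildeNorm ψ s f := by
  have hc0 : (0:ℝ) < c := by linarith
  set N : ℕ := Nat.floor (c / 3) with hNdef
  set ε : ℝ := (7 / Real.sqrt 6) * (6 / Real.exp 1 ^ 2) ^ N with hεdef
  set δ : ℝ := (N : ℝ) ^ (-s) with hδdef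
  set g : ℝ → ℝ := fun x => f x - Qc c f x with hgdef
  set a : ℕ → ℝ := fun n => ipI f (ψ n) with hadef
  set w : ℕ → ℝ := fun k => (1 + (k : ℝ) ^ 2) ^ s * (a k) ^ 2 with hwdef
  have hεpos : 0 < ε := by
    rw [hεdef]
    have : (0:ℝ) < 6 / Real.exp 1 ^ 2 := by positivity
    positivity
  have hN2 : 2 ≤ N := by
    apply Nat.le_floor; push_cast; linarith
  have hN0 : (0:ℝ) < N := by
    have : (0:ℕ) < N := lt_of_lt_of_le (by norm_num) hN2
    exact_mod_cast this
  have hδ0 : 0 ≤ δ := Real.rpow_nonneg hN0.le _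
  have h3N : 3 * (N:ℝ) ≤ c := by
    have h := Nat.floor_le (by positivity : (0:ℝ) ≤ c / 3)
    rw [← hNdef] at h
    linarith
  -- ψ is in L²
  have hψ2 : ∀ n, MemLp (ψ n) 2 muI := by
    intro n
    rw [memLp_two_iff_integrable_sq (hψ_meas n).aestronglyMeasurable]
    by_contra hni
    have h1 := hψ_orth n n
    rw [if_pos rfl] at h1
    have h2 : ¬ Integrable (fun x => ψ n x * ψ n x) muI := by
      intro h; apply hni; simpa [pow_two] using h
    rw [show ipI (ψ n) (ψ n) = ∫ x in Iset, ψ n x * ψ n x from rfl,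
      integral_undef h2] at h1
    norm_num at h1
  have hfi : Integrable f muI := hfL2.integrable one_le_two
  have hQ2 : MemLp (Qc c f) 2 muI := Qc_memL2 hc0.le hf_meas hfi
  have hg2 : MemLp g 2 muI := hfL2.sub hQ2
  -- coefficients of g
  have hcoef : ∀ n, ipI g (ψ n) = (1 - lam n) * a n := by
    intro n
    have hsa : ipI (Qc c f) (ψ n) = lam n * a n :=
      Qc_selfadj hc0.le hf_meas hfL2 (hψ_meas n) (hψ2 n) (heig n)
    have hlin : ipI g (ψ n) = ipI f (ψ n) - ipI (Qc c f) (ψ n) := by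
      rw [show ipI g (ψ n) = ∫ x in Iset, g x * ψ n x from rfl]
      rw [show (fun x => g x * ψ n x)
          = fun x => f x * ψ n x - Qc c f x * ψ n x by funext x; rw [hgdef]; ring]
      rw [integral_sub (integrable_mul_L2 hfL2 (hψ2 n)) (integrable_mul_L2 hQ2 (hψ2 n))]
      rfl
    rw [hlin, hsa, hadef]
    ring
  -- Parseval
  have hPg : ipI g g = ∑' n, ((1 - lam n) * a n) ^ 2 := by
    rw [hψ_complete g hg2]
    congr 1
    funext n
    rw [hcoef n]
  have hPf : ipI f f = ∑' n, (a n) ^ 2 := hψ_complete f hfL2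
  -- summability
  have hsum_a : Summable (fun n => (a n) ^ 2) := by
    apply Summable.of_nonneg_of_le (fun n => sq_nonneg _) _ hf_tilde
    intro n
    have h1 : (1:ℝ) ≤ (1 + (n:ℝ) ^ 2) ^ s :=
      Real.one_le_rpow (by nlinarith [sq_nonneg ((n:ℝ))]) hs.le
    rw [hwdef]
    calc a n ^ 2 = 1 * a n ^ 2 := (one_mul _).symm
      _ ≤ (1 + (n:ℝ) ^ 2) ^ s * a n ^ 2 :=
          mul_le_mul_of_nonneg_right h1 (sq_nonneg _)
  have hlam01 : ∀ n, 0 ≤ 1 - lam n ∧ 1 - lam n ≤ 1 := by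
    intro n
    have h := hlam n
    constructor <;> [linarith [h.2]; linarith [h.1]]
  have hsum_b : Summable (fun n => ((1 - lam n) * a n) ^ 2) := by
    apply Summable.of_nonneg_of_le (fun n => sq_nonneg _) _ hsum_a
    intro n
    have h := hlam01 n
    have h3 : (1 - lam n) ^ 2 ≤ 1 := by nlinarith [h.1, h.2]
    calc ((1 - lam n) * a n) ^ 2 = (1 - lam n) ^ 2 * a n ^ 2 := by ring
      _ ≤ 1 * a n ^ 2 := mul_le_mul_of_nonneg_right h3 (sq_nonneg _)
      _ = a n ^ 2 := one_mul _
  -- bound on 1 - lam n for n ≤ N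
  have hεn : ∀ n, n ≤ N → 1 - lam n ≤ ε := by
    intro n hn
    have hlt : (n:ℝ) < c / 2.7 := by
      have h1 : (n:ℝ) ≤ N := by exact_mod_cast hn
      have h2 : c / 3 < c / 2.7 := by
        apply div_lt_div_of_pos_left hc0 (by norm_num) (by norm_num)
      have h3 : (N:ℝ) ≤ c / 3 := by linarith
      linarith
    refine (hlam_bound n hlt).trans ?_
    refine le_trans ?_ (eps_bound hc)
    rw [mul_div_assoc, mul_div_assoc]
    apply mul_le_mul_of_nonneg_left _ (by positivity)
    exact pow_div_fact_mono N (by linarith) n hn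
  -- split the sum
  have hsplit := (Summable.sum_add_tsum_nat_add (f := fun n => ((1 - lam n) * a n) ^ 2) (N + 1)
    hsum_b).symm
  -- head bound
  have hF0 : 0 ≤ ipI f f := by
    rw [hPf]; exact tsum_nonneg fun n => sq_nonneg _
  have hhead : (∑ i ∈ Finset.range (N + 1), ((1 - lam i) * a i) ^ 2) ≤ ε ^ 2 * ipI f f := by
    calc (∑ i ∈ Finset.range (N + 1), ((1 - lam i) * a i) ^ 2)
        ≤ ∑ i ∈ Finset.range (N + 1), ε ^ 2 * (a i) ^ 2 := by
          apply Finset.sum_le_sum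
          intro i hi
          have hi' : i ≤ N := Nat.lt_succ_iff.mp (Finset.mem_range.mp hi)
          have h1 := hεn i hi'
          have h2 := (hlam01 i).1
          have h3 : (1 - lam i) ^ 2 ≤ ε ^ 2 := by nlinarith
          calc ((1 - lam i) * a i) ^ 2 = (1 - lam i) ^ 2 * a i ^ 2 := by ring
            _ ≤ ε ^ 2 * a i ^ 2 := mul_le_mul_of_nonneg_right h3 (sq_nonneg _)
      _ = ε ^ 2 * ∑ i ∈ Finset.range (N + 1), (a i) ^ 2 := by
          rw [Finset.mul_sum]
      _ ≤ ε ^ 2 * ∑' n, (a n) ^ 2 := by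
          apply mul_le_mul_of_nonneg_left _ (by positivity)
          exact Summable.sum_le_tsum _ (fun i _ => sq_nonneg _) hsum_a
      _ = ε ^ 2 * ipI f f := by rw [hPf]
  -- tail bound
  have hW : Summable w := hf_tilde
  have hδsq : ∀ k : ℕ, N + 1 ≤ k → (1:ℝ) ≤ δ ^ 2 * (1 + (k:ℝ) ^ 2) ^ s := by
    intro k hk
    have hkN : (N:ℝ) ^ 2 ≤ 1 + (k:ℝ) ^ 2 := by
      have : (N:ℝ) ≤ k := by exact_mod_cast le_trans (Nat.le_succ N) hk
      nlinarith
    have h1 : ((N:ℝ) ^ 2) ^ s ≤ (1 + (k:ℝ) ^ 2) ^ s :=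
      Real.rpow_le_rpow (by positivity) hkN hs.le
    have h2 : δ ^ 2 * ((N:ℝ) ^ 2) ^ s = 1 := by
      rw [hδdef, ← Real.rpow_natCast ((N:ℝ) ^ (-s)) 2, ← Real.rpow_natCast (N:ℝ) 2,
        ← Real.rpow_mul hN0.le, ← Real.rpow_mul hN0.le, ← Real.rpow_add hN0]
      rw [show -s * ((2:ℕ):ℝ) + ((2:ℕ):ℝ) * s = 0 by push_cast; ring, Real.rpow_zero]
    calc (1:ℝ) = δ ^ 2 * ((N:ℝ) ^ 2) ^ s := h2.symm
      _ ≤ δ ^ 2 * (1 + (k:ℝ) ^ 2) ^ s :=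
          mul_le_mul_of_nonneg_left h1 (by positivity)
  have htail : (∑' i : ℕ, ((1 - lam (i + (N + 1))) * a (i + (N + 1))) ^ 2)
      ≤ δ ^ 2 * ∑' k, w k := by
    have hWs : Summable (fun i => δ ^ 2 * w (i + (N + 1))) :=
      ((hW.comp_injective (add_left_injective (N+1))).mul_left _)
    calc (∑' i : ℕ, ((1 - lam (i + (N + 1))) * a (i + (N + 1))) ^ 2)
        ≤ ∑' i : ℕ, δ ^ 2 * w (i + (N + 1)) := by
          apply Summable.tsum_le_tsum _ (hsum_b.comp_injective (add_left_injective (N+1))) hWs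
          intro i
          have h := hlam01 (i + (N + 1))
          have hδk := hδsq (i + (N + 1)) (Nat.le_add_left _ _)
          have h3 : (1 - lam (i + (N + 1))) ^ 2 ≤ 1 := by nlinarith [h.1, h.2]
          rw [hwdef]
          simp only [Function.comp]
          calc ((1 - lam (i + (N + 1))) * a (i + (N + 1))) ^ 2
              = (1 - lam (i + (N + 1))) ^ 2 * a (i + (N + 1)) ^ 2 := by ring
            _ ≤ 1 * a (i + (N + 1)) ^ 2 := mul_le_mul_of_nonneg_right h3 (sq_nonneg _)
            _ ≤ (δ ^ 2 * (1 + (↑(i + (N + 1)) : ℝ) ^ 2) ^ s) * a (i + (N + 1)) ^ 2 :=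
                mul_le_mul_of_nonneg_right hδk (sq_nonneg _)
            _ = δ ^ 2 * ((1 + (↑(i + (N + 1)) : ℝ) ^ 2) ^ s * a (i + (N + 1)) ^ 2) := by ring
      _ = δ ^ 2 * ∑' i : ℕ, w (i + (N + 1)) := tsum_mul_left
      _ ≤ δ ^ 2 * ∑' k, w k := by
          apply mul_le_mul_of_nonneg_left _ (by positivity)
          have := (Summable.sum_add_tsum_nat_add (f := w) (N + 1) hW)
          have hpos : 0 ≤ ∑ i ∈ Finset.range (N + 1), w i := by
            apply Finset.sum_nonneg
            intro i _
            rw [hwdef]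
            positivity
          linarith
  -- conclude
  have hT0 : 0 ≤ ∑' k, w k := tsum_nonneg fun k => by rw [hwdef]; positivity
  have hhead0 : 0 ≤ ∑ i ∈ Finset.range (N + 1), ((1 - lam i) * a i) ^ 2 :=
    Finset.sum_nonneg fun i _ => sq_nonneg _
  have htail0 : 0 ≤ ∑' i : ℕ, ((1 - lam (i + (N + 1))) * a (i + (N + 1))) ^ 2 :=
    tsum_nonneg fun i => sq_nonneg _
  have hnormg : normI g = Real.sqrt (ipI g g) := rfl
  rw [show normI (fun x => f x - Qc c f x) = normI g from rfl, hnormg, hPg, hsplit]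
  calc Real.sqrt ((∑ i ∈ Finset.range (N + 1), ((1 - lam i) * a i) ^ 2)
        + ∑' i : ℕ, ((1 - lam (i + (N + 1))) * a (i + (N + 1))) ^ 2)
      ≤ Real.sqrt (∑ i ∈ Finset.range (N + 1), ((1 - lam i) * a i) ^ 2)
        + Real.sqrt (∑' i : ℕ, ((1 - lam (i + (N + 1))) * a (i + (N + 1))) ^ 2) :=
        sqrt_add_le hhead0 htail0
    _ ≤ Real.sqrt (ε ^ 2 * ipI f f) + Real.sqrt (δ ^ 2 * ∑' k, w k) := by
        apply add_le_add (Real.sqrt_le_sqrt hhead) (Real.sqrt_le_sqrt htail)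
    _ = ε * normI f + δ * tildeNorm ψ s f := by
        rw [Real.sqrt_mul (by positivity) (ipI f f), Real.sqrt_mul (by positivity) _,
          Real.sqrt_sq hεpos.le, Real.sqrt_sq hδ0]
        rfl
end
end
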